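/- Let (Z,d) be a uniformly locally finite metric space, let R > 0, let k : Z × Z → ℂ be a Schur multiplier, and let a be a bounded operator on ℓ²(Z) with propagation at most R. Then ‖m_k(a) − a‖ ≤ N_R · ‖a‖ · sup{|k(x,y) − 1| : x,y ∈ Z, d(x,y) ≤ R}, where N_R = sup_{z∈Z} |B(z,R)|. -/

import Mathlib

open MeasureTheory Metric Bornology Filter Topology
open scoped ENNReal BoundedContinuousFunction

noncomputable section

/-- `ℓ²(X)` over `ℂ`. -/
abbrev l2 (X : Type*) : Type _ := lp (fun _ : X => ℂ) 2

/-- The standard basis vector `δ_x` of `ℓ²(X)`. -/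
def delta {X : Type*} (x : X) : l2 X := by classical exact lp.single 2 x 1

/-- The matrix entry `a_{x,y} = ⟨a δ_y, δ_x⟩` of a bounded operator on `ℓ²(X)`. -/
def entry {X : Type*} (a : l2 X →L[ℂ] l2 X) (x y : X) : ℂ := inner ℂ (delta x) (a (delta y))

/-- A metric space is uniformly locally finite if there is a uniform bound on the
cardinality of all closed balls of each fixed radius. -/
def UniformlyLocallyFinite (Z : Type*) [MetricSpace Z] : Prop :=
  ∀ S > (0 : ℝ), ∃ N : ℕ, ∀ z : Z,
    (Metric.closedBall z S).Finite ∧ (Metric.closedBall z S).ncard ≤ N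

/-- A bounded operator on `ℓ²(Z)` has propagation at most `R`. -/
def HasPropagationLE {Z : Type*} [MetricSpace Z] (a : l2 Z →L[ℂ] l2 Z) (R : ℝ) : Prop :=
  ∀ x y : Z, R < dist x y → entry a x y = 0

/-- The uniform Roe algebra of `Z`: the operator-norm closure of the set of bounded
operators of finite propagation. -/
def uniformRoeAlgebra (Z : Type*) [MetricSpace Z] : Set (l2 Z →L[ℂ] l2 Z) :=
  closure {a | ∃ R : ℝ, HasPropagationLE a R}

/-- A ghost operator: the matrix entries vanish at infinity. -/
def IsGhost {Z : Type*} [MetricSpace Z] (a : l2 Z →L[ℂ] l2 Z) : Prop :=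
  ∀ ε > (0 : ℝ), ∃ F : Set Z, Bornology.IsBounded F ∧
    ∀ x y : Z, (x, y) ∉ F ×ˢ F → ‖entry a x y‖ < ε

namespace SchurAux

variable {X : Type*}

lemma delta_eq [DecidableEq X] (x : X) : (delta x : l2 X) = lp.single 2 x 1 := by
  unfold delta
  congr!

lemma norm_delta (x : X) : ‖(delta x : l2 X)‖ = 1 := by
  classical
  rw [delta_eq]
  simpa using lp.norm_single (p := 2) (E := fun _ : X => ℂ) (by norm_num) (fun _ => (1 : ℂ)) x

lemma inner_delta_left (x : X) (f : l2 X) : (inner (𝕜 := ℂ) (delta x) f) = f x := by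
  classical
  rw [delta_eq, lp.inner_single_left]
  simp [RCLike.inner_apply]

lemma norm_entry_le (a : l2 X →L[ℂ] l2 X) (x y : X) : ‖entry a x y‖ ≤ ‖a‖ := by
  have h1 : ‖entry a x y‖ ≤ ‖(delta x : l2 X)‖ * ‖a (delta y)‖ := norm_inner_le_norm _ _
  have h2 : ‖a (delta y)‖ ≤ ‖a‖ * ‖(delta y : l2 X)‖ := a.le_opNorm _
  rw [norm_delta] at h1
  rw [norm_delta, mul_one] at h2
  rw [one_mul] at h1
  exact h1.trans h2

lemma entry_sub (a b : l2 X →L[ℂ] l2 X) (x y : X) :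
    entry (a - b) x y = entry a x y - entry b x y := by
  simp [entry, inner_sub_right]

lemma hasSum_entry_mul (b : l2 X →L[ℂ] l2 X) (v : l2 X) (x : X) :
    HasSum (fun y => entry b x y * v y) ((b v) x) := by
  classical
  have h1 : HasSum (fun y : X => lp.single 2 y (v y)) v :=
    lp.hasSum_single (by norm_num) v
  have h3 := (h1.mapL b).mapL (innerSL ℂ (delta x))
  have heq : ∀ y : X, innerSL ℂ (delta x) (b (lp.single 2 y (v y))) = entry b x y * v y := by
    intro y
    have hsingle : lp.single 2 y (v y) = v y • (delta y : l2 X) := by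
      rw [delta_eq]
      rw [← lp.single_smul]
      norm_num
    rw [innerSL_apply_apply, hsingle, b.map_smul, inner_smul_right, entry]
    ring
  rw [show innerSL ℂ (delta x) (b v) = (b v) x from by rw [innerSL_apply_apply, inner_delta_left]] at h3
  exact h3.congr_fun (fun y => (heq y).symm)

lemma tsum_nnnorm_sq (f : l2 X) :
    ∑' x, (‖f x‖₊ : ℝ≥0∞) ^ 2 = (‖f‖₊ : ℝ≥0∞) ^ 2 := by
  have hp : (0:ℝ) < (2 : ℝ≥0∞).toReal := by norm_num
  have h := lp.norm_rpow_eq_tsum hp f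
  have hsum : Summable (fun i => ‖f i‖ ^ ((2:ℝ≥0∞)).toReal) := (lp.memℓp f).summable hp
  have h2 : ((2:ℝ≥0∞)).toReal = (2:ℝ) := by norm_num
  rw [h2] at h hsum
  have : ∀ r : ℝ, 0 ≤ r → r ^ (2:ℝ) = r ^ (2:ℕ) := by
    intro r hr
    rw [← Real.rpow_natCast r 2]
    norm_num
  calc ∑' x, (‖f x‖₊ : ℝ≥0∞) ^ 2 = ∑' x, ENNReal.ofReal (‖f x‖ ^ (2:ℝ)) := by
        congr 1; funext x
        rw [this _ (norm_nonneg _), ENNReal.ofReal_pow (norm_nonneg _), ofReal_norm, enorm_eq_nnnorm]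
    _ = ENNReal.ofReal (∑' x, ‖f x‖ ^ (2:ℝ)) :=
        (ENNReal.ofReal_tsum_of_nonneg (fun x => Real.rpow_nonneg (norm_nonneg _) _) hsum).symm
    _ = ENNReal.ofReal (‖f‖ ^ (2:ℝ)) := by rw [h]
    _ = (‖f‖₊ : ℝ≥0∞) ^ 2 := by
        rw [this _ (norm_nonneg _), ENNReal.ofReal_pow (norm_nonneg _), ofReal_norm, enorm_eq_nnnorm]

end SchurAux

open SchurAux in
/-- For a Schur multiplier `k` (with multiplication operator `M = m_k`)
and an operator `a` of propagation at most `R` on a uniformly locally finite space,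
`‖m_k(a) - a‖ ≤ N_R · ‖a‖ · sup {|k(x,y) - 1| : d(x,y) ≤ R}`, where `N_R` is any bound
on the cardinality of the closed balls of radius `R`. -/
theorem schur_multiplier_estimate_on_finite_propagation
    (Z : Type*) [MetricSpace Z] (hZ : UniformlyLocallyFinite Z)
    (R : ℝ) (hR : 0 < R) (k : Z → Z → ℂ)
    (M : (l2 Z →L[ℂ] l2 Z) →L[ℂ] l2 Z →L[ℂ] l2 Z)
    (hM : ∀ (a : l2 Z →L[ℂ] l2 Z) (x y : Z), entry (M a) x y = k x y * entry a x y)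
    (a : l2 Z →L[ℂ] l2 Z) (ha : HasPropagationLE a R)
    (N : ℕ) (hN : ∀ z : Z, (Metric.closedBall z R).ncard ≤ N) :
    ‖M a - a‖ ≤ (N : ℝ) * ‖a‖ *
      sSup {r : ℝ | ∃ x y : Z, dist x y ≤ R ∧ r = ‖k x y - 1‖} := by
  classical
  set T : Set ℝ := {r : ℝ | ∃ x y : Z, dist x y ≤ R ∧ r = ‖k x y - 1‖} with hT
  have hbdd : BddAbove T := by
    refine ⟨‖M‖ + 1, ?_⟩
    rintro r ⟨x, y, -, rfl⟩
    have h1 : ‖k x y‖ ≤ ‖M‖ := by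
      set e : l2 Z →L[ℂ] l2 Z := (innerSL ℂ (delta y)).smulRight (delta x) with he_def
      have hinxx : (inner (𝕜 := ℂ) (delta x : l2 Z) (delta x)) = 1 := by
        rw [inner_delta_left, delta_eq, lp.single_apply_self]
      have hinyy : (inner (𝕜 := ℂ) (delta y : l2 Z) (delta y)) = 1 := by
        rw [inner_delta_left, delta_eq, lp.single_apply_self]
      have he : entry e x y = 1 := by
        rw [entry, he_def, ContinuousLinearMap.smulRight_apply, innerSL_apply_apply,
          inner_smul_right, hinxx, hinyy, mul_one]
      have hne : ‖e‖ = 1 := by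
        rw [he_def, ContinuousLinearMap.norm_smulRight_apply, innerSL_apply_norm,
          norm_delta, norm_delta, mul_one]
      have h2 := norm_entry_le (M e) x y
      rw [hM, he, mul_one] at h2
      calc ‖k x y‖ ≤ ‖M e‖ := h2
        _ ≤ ‖M‖ * ‖e‖ := M.le_opNorm e
        _ = ‖M‖ := by rw [hne, mul_one]
    calc ‖k x y - 1‖ ≤ ‖k x y‖ + ‖(1:ℂ)‖ := norm_sub_le _ _
      _ ≤ ‖M‖ + 1 := by rw [norm_one]; linarith
  rcases isEmpty_or_nonempty Z with hZe | hZn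
  · have hsub : Subsingleton (l2 Z) := ⟨fun f g => lp.ext (funext fun z => (hZe.elim z))⟩
    have hb0 : M a - a = 0 := ContinuousLinearMap.ext fun v => Subsingleton.elim _ _
    have hTe : T = ∅ := by
      ext r
      simp only [hT, Set.mem_setOf_eq, Set.mem_empty_iff_false, iff_false]
      rintro ⟨x, -⟩
      exact hZe.elim x
    rw [hb0, hTe, norm_zero, Real.sSup_empty, mul_zero]
  · obtain ⟨z⟩ := hZn
    set s := sSup T with hs
    have hk : ∀ x y : Z, dist x y ≤ R → ‖k x y - 1‖ ≤ s := fun x y h =>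
      le_csSup hbdd ⟨x, y, h, rfl⟩
    have hs0 : 0 ≤ s := le_trans (norm_nonneg _) (hk z z (by simpa using hR.le))
    set c := ‖a‖ * s with hc
    have hc0 : 0 ≤ c := mul_nonneg (norm_nonneg _) hs0
    set b := M a - a with hb
    have hent : ∀ x y : Z, entry b x y = (k x y - 1) * entry a x y := by
      intro x y
      rw [hb, entry_sub, hM, sub_mul, one_mul]
    have hent0 : ∀ x y : Z, R < dist x y → entry b x y = 0 := fun x y h => by
      rw [hent, ha x y h, mul_zero]
    have hentc : ∀ x y : Z, ‖entry b x y‖ ≤ c := by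
      intro x y
      by_cases h : dist x y ≤ R
      · rw [hent, hc]
        calc ‖(k x y - 1) * entry a x y‖ = ‖k x y - 1‖ * ‖entry a x y‖ := norm_mul _ _
          _ ≤ s * ‖a‖ := mul_le_mul (hk x y h) (norm_entry_le a x y) (norm_nonneg _) hs0
          _ = ‖a‖ * s := mul_comm _ _
      · rw [hent0 x y (not_le.1 h), norm_zero]; exact hc0
    obtain ⟨N', hfin⟩ := hZ R hR
    set F : Z → Finset Z := fun z => (hfin z).1.toFinset with hF
    have hFmem : ∀ z w : Z, w ∈ F z ↔ dist w z ≤ R := by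
      intro z w
      rw [hF]
      simp [Set.Finite.mem_toFinset, Metric.mem_closedBall]
    have hFcard : ∀ z : Z, (F z).card ≤ N := by
      intro z
      have h := hN z
      rwa [Set.ncard_eq_toFinset_card _ (hfin z).1] at h
    refine ContinuousLinearMap.opNorm_le_bound _
      (mul_nonneg (mul_nonneg (Nat.cast_nonneg _) (norm_nonneg _)) hs0) ?_
    intro v
    have hrow : ∀ x : Z, (b v) x = ∑ y ∈ F x, entry b x y * v y := by
      intro x
      refine (hasSum_entry_mul b v x).unique (hasSum_sum_of_ne_finset_zero ?_)
      intro y hy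
      have hd : R < dist x y := by
        rw [hFmem] at hy
        rw [dist_comm]
        exact not_le.1 hy
      rw [hent0 x y hd, zero_mul]
    -- pointwise bound
    have hsq : ∀ x : Z, ‖(b v) x‖ ^ 2 ≤ (N : ℝ) * c ^ 2 * ∑ y ∈ F x, ‖v y‖ ^ 2 := by
      intro x
      have h1 : ‖(b v) x‖ ≤ ∑ y ∈ F x, c * ‖v y‖ := by
        rw [hrow x]
        refine (norm_sum_le _ _).trans (Finset.sum_le_sum fun y _ => ?_)
        rw [norm_mul]
        exact mul_le_mul_of_nonneg_right (hentc x y) (norm_nonneg _)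
      have h2 : ‖(b v) x‖ ^ 2 ≤ (∑ y ∈ F x, c * ‖v y‖) ^ 2 := by
        apply pow_le_pow_left₀ (norm_nonneg _) h1
      have h3 : (∑ y ∈ F x, c * ‖v y‖) ^ 2 ≤ (F x).card * ∑ y ∈ F x, (c * ‖v y‖) ^ 2 :=
        sq_sum_le_card_mul_sum_sq
      have h4 : ((F x).card : ℝ) * ∑ y ∈ F x, (c * ‖v y‖) ^ 2
          ≤ (N : ℝ) * c ^ 2 * ∑ y ∈ F x, ‖v y‖ ^ 2 := by
        have hsum0 : (0:ℝ) ≤ ∑ y ∈ F x, (c * ‖v y‖) ^ 2 :=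
          Finset.sum_nonneg fun y _ => sq_nonneg _
        calc ((F x).card : ℝ) * ∑ y ∈ F x, (c * ‖v y‖) ^ 2
            ≤ (N : ℝ) * ∑ y ∈ F x, (c * ‖v y‖) ^ 2 := by
              apply mul_le_mul_of_nonneg_right _ hsum0
              exact_mod_cast hFcard x
          _ = (N : ℝ) * c ^ 2 * ∑ y ∈ F x, ‖v y‖ ^ 2 := by
              rw [mul_assoc]
              congr 1
              rw [Finset.mul_sum]
              exact Finset.sum_congr rfl fun y _ => by ring
      linarith
    -- ENNReal computation
    set g : Z → ℝ≥0∞ := fun y => (‖v y‖₊ : ℝ≥0∞) ^ 2 with hg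
    have hdouble : ∀ x : Z, (∑ y ∈ F x, g y)
        = ∑' y : Z, (if dist y x ≤ R then g y else 0) := by
      intro x
      rw [tsum_eq_sum (s := F x) (fun y hy => by rw [if_neg (fun h => hy ((hFmem x y).2 h))])]
      exact Finset.sum_congr rfl fun y hy => by rw [if_pos ((hFmem x y).1 hy)]
    have hswap : ∑' x : Z, ∑ y ∈ F x, g y ≤ (N : ℝ≥0∞) * ∑' y : Z, g y := by
      calc ∑' x : Z, ∑ y ∈ F x, g y
          = ∑' x : Z, ∑' y : Z, (if dist y x ≤ R then g y else 0) := by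
            exact tsum_congr hdouble
        _ = ∑' y : Z, ∑' x : Z, (if dist y x ≤ R then g y else 0) := ENNReal.tsum_comm
        _ ≤ ∑' y : Z, (N : ℝ≥0∞) * g y := by
            refine ENNReal.tsum_le_tsum fun y => ?_
            have hvanish : ∀ x : Z, x ∉ F y → (if dist y x ≤ R then g y else 0) = 0 := by
              intro x hx
              rw [if_neg]
              intro h
              exact hx ((hFmem y x).2 (by rwa [dist_comm]))
            rw [tsum_eq_sum (s := F y) hvanish]
            calc ∑ x ∈ F y, (if dist y x ≤ R then g y else 0)
                ≤ ∑ _x ∈ F y, g y := Finset.sum_le_sum fun x _ => by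
                  split_ifs <;> simp
              _ = (F y).card * g y := by rw [Finset.sum_const, nsmul_eq_mul]
              _ ≤ (N : ℝ≥0∞) * g y :=
                  mul_le_mul_left (Nat.cast_le.2 (hFcard y)) (g y)
        _ = (N : ℝ≥0∞) * ∑' y : Z, g y := ENNReal.tsum_mul_left
    have hgsum : ∑' y : Z, g y = (‖v‖₊ : ℝ≥0∞) ^ 2 := tsum_nnnorm_sq v
    have hkey : (‖b v‖₊ : ℝ≥0∞) ^ 2 ≤ ENNReal.ofReal (((N:ℝ) * c * ‖v‖) ^ 2) := by
      calc (‖b v‖₊ : ℝ≥0∞) ^ 2 = ∑' x : Z, (‖(b v) x‖₊ : ℝ≥0∞) ^ 2 := (tsum_nnnorm_sq _).symm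
        _ ≤ ∑' x : Z, ((N : ℝ≥0∞) * ENNReal.ofReal (c ^ 2) * ∑ y ∈ F x, g y) := by
            refine ENNReal.tsum_le_tsum fun x => ?_
            have := hsq x
            have h5 : (‖(b v) x‖₊ : ℝ≥0∞) ^ 2 = ENNReal.ofReal (‖(b v) x‖ ^ 2) := by
              rw [ENNReal.ofReal_pow (norm_nonneg _), ofReal_norm, enorm_eq_nnnorm]
            rw [h5]
            refine (ENNReal.ofReal_le_ofReal this).trans ?_
            rw [ENNReal.ofReal_mul (by positivity), ENNReal.ofReal_mul (Nat.cast_nonneg _)]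
            rw [ENNReal.ofReal_natCast]
            refine mul_le_mul_right ?_ _
            rw [ENNReal.ofReal_sum_of_nonneg (fun y _ => sq_nonneg _)]
            refine le_of_eq (Finset.sum_congr rfl fun y _ => ?_)
            rw [ENNReal.ofReal_pow (norm_nonneg _), ofReal_norm, enorm_eq_nnnorm]
        _ = (N : ℝ≥0∞) * ENNReal.ofReal (c ^ 2) * ∑' x : Z, ∑ y ∈ F x, g y :=
            ENNReal.tsum_mul_left
        _ ≤ (N : ℝ≥0∞) * ENNReal.ofReal (c ^ 2) * ((N : ℝ≥0∞) * (‖v‖₊ : ℝ≥0∞) ^ 2) := by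
            refine mul_le_mul_right ?_ _
            rw [← hgsum]
            exact hswap
        _ = ENNReal.ofReal (((N:ℝ) * c * ‖v‖) ^ 2) := by
            rw [show ((N:ℝ) * c * ‖v‖) ^ 2 = (N:ℝ) * c ^ 2 * ((N:ℝ) * ‖v‖ ^ 2) by ring]
            rw [ENNReal.ofReal_mul (by positivity), ENNReal.ofReal_mul (Nat.cast_nonneg _),
              ENNReal.ofReal_mul (Nat.cast_nonneg _), ENNReal.ofReal_natCast,
              ENNReal.ofReal_pow (norm_nonneg _), ofReal_norm, enorm_eq_nnnorm]
    have hreal : ‖b v‖ ^ 2 ≤ ((N:ℝ) * c * ‖v‖) ^ 2 := by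
      have h5 : (‖b v‖₊ : ℝ≥0∞) ^ 2 = ENNReal.ofReal (‖b v‖ ^ 2) := by
        rw [ENNReal.ofReal_pow (norm_nonneg _), ofReal_norm, enorm_eq_nnnorm]
      rw [h5] at hkey
      exact (ENNReal.ofReal_le_ofReal_iff (by positivity)).1 hkey
    have := (pow_le_pow_iff_left₀ (norm_nonneg _) (by positivity) (two_ne_zero)).1 hreal
    calc ‖b v‖ ≤ (N:ℝ) * c * ‖v‖ := this
      _ = (N:ℝ) * ‖a‖ * s * ‖v‖ := by rw [hc]; ring
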